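/- arXiv:2305.11492 — 3 statements merged into one kernel-verified Lean document; each statement's English description precedes it below -/
import Mathlib

section
/- For Re(β) > Re(α) > 0, the regularized confluent hypergeometric function defined by ₁f₁(α, β; z) := (Γ(α)Γ(β−α)/Γ(β)) · ₁F₁(α, β; z) has the integral representation ₁f₁(α, β; z) = ∫₀¹ e^{zu} u^{α−1} (1−u)^{β−α−1} du. -/
open Complex

/-- Kummer's confluent hypergeometric function `₁F₁(α, β; z)`. -/
noncomputable def kummer1F1 (α β z : ℂ) : ℂ :=
  ∑' n : ℕ, ((ascPochhammer ℂ n).eval α / (ascPochhammer ℂ n).eval β) * z ^ n / n.factorial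

/-- The regularized function `₁f₁(α, β; z) = (Γ(α)Γ(β−α)/Γ(β)) ₁F₁(α, β; z)`. -/
noncomputable def kummer1f1 (α β z : ℂ) : ℂ :=
  Complex.Gamma α * Complex.Gamma (β - α) / Complex.Gamma β * kummer1F1 α β z

lemma gamma_add_nat_eq (α : ℂ) (hα : 0 < α.re) (n : ℕ) :
    Complex.Gamma (α + n) = Complex.Gamma α * (ascPochhammer ℂ n).eval α := by
  induction n with
  | zero => simp
  | succ n ih =>
    have hne : α + (n : ℂ) ≠ 0 := by
      intro h
      have := congrArg Complex.re h
      simp only [add_re, natCast_re, zero_re] at this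
      have hn : (0 : ℝ) ≤ (n : ℝ) := Nat.cast_nonneg n
      linarith
    have h1 : α + ((n : ℕ) + 1 : ℕ) = (α + n) + 1 := by push_cast; ring
    rw [h1, Complex.Gamma_add_one _ hne, ih, ascPochhammer_succ_eval]
    ring

/-- For `Re(β) > Re(α) > 0`, one has
`₁f₁(α, β; z) = ∫₀¹ e^{zu} u^{α−1} (1−u)^{β−α−1} du`. -/
theorem kummer1f1_eq_integral (α β z : ℂ) (hα : 0 < α.re) (hβ : α.re < β.re) :
    kummer1f1 α β z =
      ∫ u in Set.Ioo (0 : ℝ) 1,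
        Complex.exp (z * u) * (u : ℂ) ^ (α - 1) * ((1 : ℂ) - u) ^ (β - α - 1) := by
  have hβα : 0 < (β - α).re := by simp only [sub_re]; linarith
  have hβ0 : 0 < β.re := lt_trans hα hβ
  set F : ℕ → ℝ → ℂ := fun n u =>
    z ^ n / n.factorial * ((u : ℂ) ^ (α + n - 1) * (1 - (u : ℂ)) ^ (β - α - 1)) with hF
  -- integrability of each term
  have hint : ∀ n : ℕ, MeasureTheory.IntegrableOn (F n) (Set.Ioo 0 1) := by
    intro n
    have h1 : 0 < (α + n).re := by
      simp only [add_re, natCast_re]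
      have hn : (0 : ℝ) ≤ (n : ℝ) := Nat.cast_nonneg n
      linarith
    have h2 := (Complex.betaIntegral_convergent h1 hβα)
    rw [intervalIntegrable_iff_integrableOn_Ioc_of_le zero_le_one] at h2
    exact (h2.mono_set Set.Ioo_subset_Ioc_self).const_mul _
  -- the dominating function
  have hG : MeasureTheory.IntegrableOn
      (fun u : ℝ => (u : ℂ) ^ (α - 1) * (1 - (u : ℂ)) ^ (β - α - 1)) (Set.Ioo 0 1) := by
    have h2 := (Complex.betaIntegral_convergent hα hβα)
    rw [intervalIntegrable_iff_integrableOn_Ioc_of_le zero_le_one] at h2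
    exact h2.mono_set Set.Ioo_subset_Ioc_self
  set C : ℝ := ∫ u in Set.Ioo (0:ℝ) 1, ‖(u : ℂ) ^ (α - 1) * (1 - (u : ℂ)) ^ (β - α - 1)‖ with hC
  -- bound on the integrals of norms
  have hbound : ∀ n : ℕ, (∫ u in Set.Ioo (0:ℝ) 1, ‖F n u‖) ≤ ‖z‖ ^ n / n.factorial * C := by
    intro n
    have key : ∀ u ∈ Set.Ioo (0:ℝ) 1,
        ‖F n u‖ ≤ ‖z‖ ^ n / n.factorial *
          ‖(u : ℂ) ^ (α - 1) * (1 - (u : ℂ)) ^ (β - α - 1)‖ := by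
      intro u hu
      obtain ⟨hu0, hu1⟩ := hu
      have h1u : (0:ℝ) < 1 - u := by linarith
      have e1 : ‖(u : ℂ) ^ (α + n - 1)‖ = u ^ ((α : ℂ) + n - 1).re := by
        rw [Complex.norm_cpow_eq_rpow_re_of_pos hu0]
      have e2 : ‖(u : ℂ) ^ (α - 1)‖ = u ^ (α - 1).re := by
        rw [Complex.norm_cpow_eq_rpow_re_of_pos hu0]
      have e3 : u ^ ((α : ℂ) + n - 1).re ≤ u ^ (α - 1).re := by
        apply Real.rpow_le_rpow_of_exponent_ge hu0 hu1.le
        simp only [sub_re, add_re, natCast_re, one_re]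
        have hn : (0 : ℝ) ≤ (n : ℝ) := Nat.cast_nonneg n
        linarith
      have hz : ‖z ^ n / (n.factorial : ℂ)‖ = ‖z‖ ^ n / n.factorial := by
        rw [norm_div, norm_pow]
        simp
      calc ‖F n u‖ = ‖z ^ n / (n.factorial : ℂ)‖ *
              (‖(u : ℂ) ^ (α + n - 1)‖ * ‖(1 - (u : ℂ)) ^ (β - α - 1)‖) := by
            simp [hF, norm_mul]
        _ ≤ ‖z‖ ^ n / n.factorial *
              (‖(u : ℂ) ^ (α - 1)‖ * ‖(1 - (u : ℂ)) ^ (β - α - 1)‖) := by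
            rw [hz]
            apply mul_le_mul_of_nonneg_left _ (by positivity)
            apply mul_le_mul_of_nonneg_right _ (norm_nonneg _)
            rw [e1, e2]; exact e3
        _ = ‖z‖ ^ n / n.factorial * ‖(u : ℂ) ^ (α - 1) * (1 - (u : ℂ)) ^ (β - α - 1)‖ := by
            rw [norm_mul]
    calc (∫ u in Set.Ioo (0:ℝ) 1, ‖F n u‖)
        ≤ ∫ u in Set.Ioo (0:ℝ) 1, ‖z‖ ^ n / n.factorial *
            ‖(u : ℂ) ^ (α - 1) * (1 - (u : ℂ)) ^ (β - α - 1)‖ := by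
          apply MeasureTheory.setIntegral_mono_on (hint n).norm (hG.norm.const_mul _)
            measurableSet_Ioo key
      _ = ‖z‖ ^ n / n.factorial * C := by rw [MeasureTheory.integral_const_mul, hC]
  have hsum : Summable fun n : ℕ => ∫ u in Set.Ioo (0:ℝ) 1, ‖F n u‖ := by
    apply Summable.of_nonneg_of_le
      (fun n => MeasureTheory.integral_nonneg fun _ => norm_nonneg _) hbound
    exact (Real.summable_pow_div_factorial ‖z‖).mul_right C
  -- pointwise sum identity
  have hpt : ∀ u ∈ Set.Ioo (0:ℝ) 1,
      Complex.exp (z * u) * (u : ℂ) ^ (α - 1) * ((1 : ℂ) - u) ^ (β - α - 1)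
        = ∑' n : ℕ, F n u := by
    intro u hu
    obtain ⟨hu0, _⟩ := hu
    have hune : (u : ℂ) ≠ 0 := by exact_mod_cast hu0.ne'
    have hterm : ∀ n : ℕ, F n u =
        (z * u) ^ n / n.factorial * ((u : ℂ) ^ (α - 1) * (1 - (u : ℂ)) ^ (β - α - 1)) := by
      intro n
      have : (u : ℂ) ^ (α + n - 1) = (u : ℂ) ^ (α - 1) * (u : ℂ) ^ n := by
        rw [show α + (n : ℂ) - 1 = (α - 1) + n by ring, Complex.cpow_add _ _ hune,
          Complex.cpow_natCast]
      rw [hF]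
      simp only [this, mul_pow]
      ring
    have hexp : HasSum (fun n : ℕ => (z * u) ^ n / n.factorial)
        (Complex.exp (z * u)) := by
      rw [Complex.exp_eq_exp_ℂ]
      exact NormedSpace.expSeries_div_hasSum_exp (z * u)
    have := (hexp.mul_right ((u : ℂ) ^ (α - 1) * (1 - (u : ℂ)) ^ (β - α - 1))).tsum_eq
    rw [funext hterm, this]
    ring
  -- interchange
  rw [MeasureTheory.setIntegral_congr_fun measurableSet_Ioo hpt,
    ← MeasureTheory.integral_tsum_of_summable_integral_norm hint hsum]
  -- compute each integral
  have hterm : ∀ n : ℕ, (∫ u in Set.Ioo (0:ℝ) 1, F n u)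
      = Complex.Gamma α * Complex.Gamma (β - α) / Complex.Gamma β *
          (((ascPochhammer ℂ n).eval α / (ascPochhammer ℂ n).eval β) * z ^ n / n.factorial) := by
    intro n
    have h1 : 0 < (α + n).re := by
      simp only [add_re, natCast_re]
      have hn : (0 : ℝ) ≤ (n : ℝ) := Nat.cast_nonneg n
      linarith
    have h1' : 0 < (β + n).re := by
      simp only [add_re, natCast_re]
      have hn : (0 : ℝ) ≤ (n : ℝ) := Nat.cast_nonneg n
      linarith
    have hbeta : Complex.betaIntegral (α + n) (β - α)
        = Complex.Gamma (α + n) * Complex.Gamma (β - α) / Complex.Gamma (β + n) := by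
      have h := Complex.Gamma_mul_Gamma_eq_betaIntegral h1 hβα
      rw [show α + n + (β - α) = β + n by ring] at h
      have hne : Complex.Gamma (β + n) ≠ 0 := Complex.Gamma_ne_zero_of_re_pos h1'
      rw [eq_div_iff hne]
      linear_combination -h
    have hIoo : (∫ u in Set.Ioo (0:ℝ) 1,
        (u : ℂ) ^ (α + n - 1) * (1 - (u : ℂ)) ^ (β - α - 1))
        = Complex.betaIntegral (α + n) (β - α) := by
      rw [Complex.betaIntegral, intervalIntegral.integral_of_le zero_le_one,
        MeasureTheory.integral_Ioc_eq_integral_Ioo]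
    have hGa : Complex.Gamma (α + n) = Complex.Gamma α * (ascPochhammer ℂ n).eval α :=
      gamma_add_nat_eq α hα n
    have hGb : Complex.Gamma (β + n) = Complex.Gamma β * (ascPochhammer ℂ n).eval β :=
      gamma_add_nat_eq β hβ0 n
    have hGbne : Complex.Gamma β ≠ 0 := Complex.Gamma_ne_zero_of_re_pos hβ0
    have hPbne : (ascPochhammer ℂ n).eval β ≠ 0 := by
      intro h
      have := Complex.Gamma_ne_zero_of_re_pos h1'
      rw [hGb, h, mul_zero] at this
      exact this rfl
    have hfacne : ((n.factorial : ℂ)) ≠ 0 := by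
      exact_mod_cast Nat.cast_ne_zero.mpr n.factorial_ne_zero
    rw [hF]
    simp only []
    rw [MeasureTheory.integral_const_mul, hIoo, hbeta, hGa, hGb]
    field_simp
  rw [kummer1f1, kummer1F1, ← tsum_mul_left]
  congr 1
  funext n
  rw [hterm n, mul_div_assoc]
end

section
/- Let n be a nonnegative integer, α, β complex with Re(β) > Re(α) > 0, and z ∈ ℂ. Then the n-th derivative with respect to α of ₁f₁(α, β; z) equals ∫₀¹ e^{zu} (Σ_{j=0}^n (−1)^{n−j} C(n,j) (log u)^j (log(1−u))^{n−j}) u^{α−1}(1−u)^{β−α−1} du. -/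
open Complex

/-- The integral `₁f₁(α, β; z) = ∫₀¹ e^{zu} u^{α−1} (1−u)^{β−α−1} du`
(valid representation of the regularized Kummer function for `Re β > Re α > 0`). -/
noncomputable def kummer1f1Int (α β z : ℂ) : ℂ :=
  ∫ u in Set.Ioo (0 : ℝ) 1,
    Complex.exp (z * u) * (u : ℂ) ^ (α - 1) * ((1 : ℂ) - u) ^ (β - α - 1)

namespace KummerAux

open MeasureTheory Metric

/-- `log u - log (1-u)` as a complex number. -/
noncomputable def klog (u : ℝ) : ℂ :=
  ((Real.log u : ℝ) : ℂ) - ((Real.log (1 - u) : ℝ) : ℂ)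

/-- The integrand after `m` differentiations in the parameter. -/
noncomputable def fK (β z : ℂ) (m : ℕ) (s : ℂ) (u : ℝ) : ℂ :=
  Complex.exp (z * u) * klog u ^ m * (u : ℂ) ^ (s - 1) * (((1 - u : ℝ)) : ℂ) ^ (β - s - 1)

lemma abs_log_le {x δ : ℝ} (hx : 0 < x) (hx1 : x ≤ 1) (hδ : 0 < δ) :
    |Real.log x| ≤ δ⁻¹ * x ^ (-δ) := by
  rw [abs_of_nonpos (Real.log_nonpos hx.le hx1)]
  have h := Real.log_le_rpow_div (x := x⁻¹) (by positivity) hδ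
  rw [Real.log_inv, Real.inv_rpow hx.le, ← Real.rpow_neg hx.le] at h
  calc -Real.log x ≤ x ^ (-δ) / δ := h
    _ = δ⁻¹ * x ^ (-δ) := by rw [div_eq_inv_mul]

lemma norm_fK_le (β z : ℂ) (m : ℕ) {a b δ : ℝ} (ha : 0 < a) (hb : 0 < b) (hδ : 0 < δ)
    {s : ℂ} (hs1 : a ≤ s.re) (hs2 : s.re ≤ β.re - b) {u : ℝ} (hu : u ∈ Set.Ioo (0 : ℝ) 1) :
    ‖fK β z m s u‖ ≤ Real.exp (‖z‖) * (2 / δ) ^ m *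
      (u ^ (a - (m : ℝ) * δ - 1) * (1 - u) ^ (b - (m : ℝ) * δ - 1)) := by
  obtain ⟨hu0, hu1⟩ := hu
  have h1u : 0 < 1 - u := by linarith
  -- exponential factor
  have hE : ‖Complex.exp (z * u)‖ ≤ Real.exp (‖z‖) := by
    rw [Complex.norm_exp]
    apply Real.exp_le_exp.2
    have h1 : (z * (u : ℂ)).re = z.re * u := by simp [Complex.mul_re]
    have h2 : z.re * u ≤ |z.re| := by
      calc z.re * u ≤ |z.re * u| := le_abs_self _
        _ = |z.re| * |u| := abs_mul _ _
        _ ≤ |z.re| * 1 := by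
            apply mul_le_mul_of_nonneg_left _ (abs_nonneg _)
            rw [abs_of_pos hu0]; linarith
        _ = |z.re| := mul_one _
    rw [h1]
    exact h2.trans (Complex.abs_re_le_norm z)
  -- logarithm factor
  have hx1 : (1 : ℝ) ≤ u ^ (-δ) := by
    calc (1:ℝ) = u ^ (0:ℝ) := (Real.rpow_zero _).symm
      _ ≤ u ^ (-δ) := Real.rpow_le_rpow_of_exponent_ge hu0 hu1.le (by linarith)
  have hy1 : (1 : ℝ) ≤ (1 - u) ^ (-δ) := by
    calc (1:ℝ) = (1 - u) ^ (0:ℝ) := (Real.rpow_zero _).symm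
      _ ≤ (1 - u) ^ (-δ) := Real.rpow_le_rpow_of_exponent_ge h1u (by linarith) (by linarith)
  have hL : ‖klog u‖ ≤ (2 / δ) * (u ^ (-δ) * (1 - u) ^ (-δ)) := by
    have h1 := abs_log_le hu0 hu1.le hδ
    have h2 := abs_log_le h1u (by linarith) hδ
    have hnorm : ‖klog u‖ = |Real.log u - Real.log (1 - u)| := by
      rw [klog, ← Complex.ofReal_sub, Complex.norm_real, Real.norm_eq_abs]
    rw [hnorm]
    have hδ' : (0:ℝ) < δ⁻¹ := by positivity
    calc |Real.log u - Real.log (1 - u)|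
        ≤ |Real.log u| + |Real.log (1 - u)| := abs_sub _ _
      _ ≤ δ⁻¹ * u ^ (-δ) + δ⁻¹ * (1 - u) ^ (-δ) := add_le_add h1 h2
      _ = δ⁻¹ * (u ^ (-δ) + (1 - u) ^ (-δ)) := by ring
      _ ≤ δ⁻¹ * (2 * (u ^ (-δ) * (1 - u) ^ (-δ))) := by
          apply mul_le_mul_of_nonneg_left _ hδ'.le
          nlinarith [mul_nonneg (sub_nonneg.2 hx1) (sub_nonneg.2 hy1),
            mul_le_mul hx1 hy1 (by norm_num) (by positivity)]
      _ = (2 / δ) * (u ^ (-δ) * (1 - u) ^ (-δ)) := by rw [div_eq_mul_inv]; ring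
  have hLm : ‖klog u ^ m‖ ≤ (2 / δ) ^ m * (u ^ (-((m : ℝ) * δ)) * (1 - u) ^ (-((m : ℝ) * δ))) := by
    rw [norm_pow]
    calc ‖klog u‖ ^ m ≤ ((2 / δ) * (u ^ (-δ) * (1 - u) ^ (-δ))) ^ m :=
          pow_le_pow_left₀ (norm_nonneg _) hL m
      _ = (2 / δ) ^ m * (u ^ (-((m : ℝ) * δ)) * (1 - u) ^ (-((m : ℝ) * δ))) := by
          rw [mul_pow, mul_pow, ← Real.rpow_natCast (u ^ (-δ)) m,
            ← Real.rpow_natCast ((1 - u) ^ (-δ)) m,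
            ← Real.rpow_mul hu0.le, ← Real.rpow_mul h1u.le]
          ring_nf
  have hU : ‖(u : ℂ) ^ (s - 1)‖ ≤ u ^ (a - 1) := by
    rw [Complex.norm_cpow_eq_rpow_re_of_pos hu0]
    apply Real.rpow_le_rpow_of_exponent_ge hu0 hu1.le
    rw [Complex.sub_re, Complex.one_re]; linarith
  have hV : ‖(((1 - u : ℝ)) : ℂ) ^ (β - s - 1)‖ ≤ (1 - u) ^ (b - 1) := by
    rw [Complex.norm_cpow_eq_rpow_re_of_pos h1u]
    apply Real.rpow_le_rpow_of_exponent_ge h1u (by linarith)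
    rw [Complex.sub_re, Complex.sub_re, Complex.one_re]; linarith
  calc ‖fK β z m s u‖
      = ‖Complex.exp (z * u)‖ * ‖klog u ^ m‖ * ‖(u : ℂ) ^ (s - 1)‖ *
        ‖(((1 - u : ℝ)) : ℂ) ^ (β - s - 1)‖ := by rw [fK, norm_mul, norm_mul, norm_mul]
    _ ≤ Real.exp (‖z‖) *
          ((2 / δ) ^ m * (u ^ (-((m : ℝ) * δ)) * (1 - u) ^ (-((m : ℝ) * δ)))) *
          (u ^ (a - 1)) * ((1 - u) ^ (b - 1)) := by
        gcongr <;> positivity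
    _ = Real.exp (‖z‖) * (2 / δ) ^ m *
          (u ^ (a - (m : ℝ) * δ - 1) * (1 - u) ^ (b - (m : ℝ) * δ - 1)) := by
        rw [show a - (m : ℝ) * δ - 1 = -((m : ℝ) * δ) + (a - 1) by ring,
          show b - (m : ℝ) * δ - 1 = -((m : ℝ) * δ) + (b - 1) by ring,
          Real.rpow_add hu0, Real.rpow_add h1u]
        ring

lemma integrable_bound {p q : ℝ} (hp : 0 < p) (hq : 0 < q) :
    IntegrableOn (fun u : ℝ => u ^ (p - 1) * (1 - u) ^ (q - 1)) (Set.Ioo (0 : ℝ) 1) := by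
  have h := Complex.betaIntegral_convergent (u := (p : ℂ)) (v := (q : ℂ)) (by simpa) (by simpa)
  rw [intervalIntegrable_iff_integrableOn_Ioc_of_le zero_le_one] at h
  have h2 := (h.mono_set Set.Ioo_subset_Ioc_self).norm
  refine MeasureTheory.IntegrableOn.congr_fun h2 (fun u hu => ?_) measurableSet_Ioo
  obtain ⟨hu0, hu1⟩ := hu
  have h1u : (0:ℝ) < 1 - u := by linarith
  have hc : ((1 : ℂ) - u) = (((1 - u : ℝ)) : ℂ) := by push_cast; ring
  rw [norm_mul, hc,
    Complex.norm_cpow_eq_rpow_re_of_pos hu0, Complex.norm_cpow_eq_rpow_re_of_pos h1u]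
  norm_num

lemma contOn (β z : ℂ) (m : ℕ) (s : ℂ) : ContinuousOn (fK β z m s) (Set.Ioo (0 : ℝ) 1) := by
  intro u hu
  obtain ⟨hu0, hu1⟩ := hu
  have h1u : (0:ℝ) < 1 - u := by linarith
  apply ContinuousAt.continuousWithinAt
  apply ContinuousAt.mul
  apply ContinuousAt.mul
  apply ContinuousAt.mul
  · exact (Complex.continuous_exp.comp (continuous_const.mul Complex.continuous_ofReal)).continuousAt
  · apply ContinuousAt.pow
    apply ContinuousAt.sub
    · exact Complex.continuous_ofReal.continuousAt.comp (Real.continuousAt_log hu0.ne')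
    · exact Complex.continuous_ofReal.continuousAt.comp
        ((Real.continuousAt_log h1u.ne').comp
          ((continuous_const.sub continuous_id).continuousAt))
  · exact Complex.continuousAt_ofReal_cpow_const u _ (Or.inr hu0.ne')
  · exact (Complex.continuousAt_ofReal_cpow_const (1 - u) _ (Or.inr h1u.ne')).comp
      ((continuous_const.sub continuous_id).continuousAt)

lemma mstep {c : ℝ} (m : ℕ) (hc : 0 < c) :
    (m : ℝ) * (c / (2 * (m : ℝ) + 2)) ≤ c / 2 := by
  have h2m : (0:ℝ) < 2 * (m:ℝ) + 2 := by positivity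
  calc (m : ℝ) * (c / (2 * (m : ℝ) + 2)) = c * ((m : ℝ) / (2 * (m : ℝ) + 2)) := by ring
    _ ≤ c * (1 / 2) := by
        apply mul_le_mul_of_nonneg_left _ hc.le
        rw [div_le_div_iff₀ h2m two_pos]; linarith
    _ = c / 2 := by ring

lemma fK_integrable (β z : ℂ) (m : ℕ) {s : ℂ} (hs0 : 0 < s.re) (hsβ : s.re < β.re) :
    IntegrableOn (fK β z m s) (Set.Ioo (0 : ℝ) 1) := by
  have hb : 0 < β.re - s.re := by linarith
  set c := min s.re (β.re - s.re) with hcdef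
  have hc : 0 < c := lt_min hs0 hb
  set δ := c / (2 * (m : ℝ) + 2) with hδdef
  have hδ : 0 < δ := by positivity
  have hkey : (m : ℝ) * δ ≤ c / 2 := mstep m hc
  have hca : c ≤ s.re := min_le_left _ _
  have hcb : c ≤ β.re - s.re := min_le_right _ _
  have hp : 0 < s.re - (m : ℝ) * δ := by linarith
  have hq : 0 < (β.re - s.re) - (m : ℝ) * δ := by linarith
  apply Integrable.mono'
    (((integrable_bound hp hq).const_mul (Real.exp (‖z‖) * (2 / δ) ^ m)))
    ((contOn β z m s).aestronglyMeasurable measurableSet_Ioo)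
  filter_upwards [ae_restrict_mem measurableSet_Ioo] with u hu
  exact norm_fK_le β z m hs0 hb hδ le_rfl (by linarith) hu

lemma fK_hasDerivAt (β z : ℂ) (m : ℕ) (s : ℂ) {u : ℝ} (hu : u ∈ Set.Ioo (0 : ℝ) 1) :
    HasDerivAt (fun t => fK β z m t u) (fK β z (m + 1) s u) s := by
  obtain ⟨hu0, hu1⟩ := hu
  have h1u : (0:ℝ) < 1 - u := by linarith
  have hU : HasDerivAt (fun t : ℂ => (u : ℂ) ^ (t - 1))
      ((u : ℂ) ^ (s - 1) * Complex.log u) s := by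
    have h := ((hasDerivAt_id s).sub_const 1).const_cpow (c := (u : ℂ))
      (Or.inl (by exact_mod_cast hu0.ne'))
    simpa using h
  have hV : HasDerivAt (fun t : ℂ => (((1 - u : ℝ)) : ℂ) ^ (β - t - 1))
      (-((((1 - u : ℝ)) : ℂ) ^ (β - s - 1) * Complex.log ((1 - u : ℝ) : ℂ))) s := by
    have hd : HasDerivAt (fun t : ℂ => β - t - 1) (-1) s :=
      ((hasDerivAt_id s).const_sub β).sub_const 1
    have h := hd.const_cpow (c := (((1 - u : ℝ)) : ℂ)) (Or.inl (by exact_mod_cast h1u.ne'))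
    simpa using h
  have h := (hU.const_mul (Complex.exp (z * u) * klog u ^ m)).mul hV
  have key : fK β z (m + 1) s u =
      Complex.exp (z * u) * klog u ^ m * ((u : ℂ) ^ (s - 1) * Complex.log u) *
          (((1 - u : ℝ)) : ℂ) ^ (β - s - 1) +
        Complex.exp (z * u) * klog u ^ m * (u : ℂ) ^ (s - 1) *
          (-((((1 - u : ℝ)) : ℂ) ^ (β - s - 1) * Complex.log ((1 - u : ℝ) : ℂ))) := by
    rw [fK, klog, pow_succ, ← Complex.ofReal_log hu0.le, ← Complex.ofReal_log h1u.le]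
    ring
  rw [show (fun t => fK β z m t u) = fun t =>
      Complex.exp (z * u) * klog u ^ m * (u : ℂ) ^ (t - 1) *
        (((1 - u : ℝ)) : ℂ) ^ (β - t - 1) from rfl, key]
  exact h

lemma intK_hasDerivAt (β z : ℂ) (m : ℕ) {s : ℂ} (hs0 : 0 < s.re) (hsβ : s.re < β.re) :
    HasDerivAt (fun t => ∫ u in Set.Ioo (0 : ℝ) 1, fK β z m t u)
      (∫ u in Set.Ioo (0 : ℝ) 1, fK β z (m + 1) s u) s := by
  have hb0 : 0 < β.re - s.re := by linarith
  set ε := min s.re (β.re - s.re) / 2 with hεdef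
  have hmin : 0 < min s.re (β.re - s.re) := lt_min hs0 hb0
  have hε : 0 < ε := by positivity
  set a := s.re - ε with hadef
  set b := β.re - s.re - ε with hbdef
  have hminl : min s.re (β.re - s.re) ≤ s.re := min_le_left _ _
  have hminr : min s.re (β.re - s.re) ≤ β.re - s.re := min_le_right _ _
  have ha : 0 < a := by rw [hadef, hεdef]; linarith
  have hb : 0 < b := by rw [hbdef, hεdef]; linarith
  set c := min a b with hcdef
  have hc : 0 < c := lt_min ha hb
  set δ := c / (2 * ((m + 1 : ℕ) : ℝ) + 2) with hδdef
  have hδ : 0 < δ := by positivity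
  have hkey : ((m + 1 : ℕ) : ℝ) * δ ≤ c / 2 := mstep (m + 1) hc
  have hca : c ≤ a := min_le_left _ _
  have hcb : c ≤ b := min_le_right _ _
  have hp : 0 < a - ((m + 1 : ℕ) : ℝ) * δ := by linarith
  have hq : 0 < b - ((m + 1 : ℕ) : ℝ) * δ := by linarith
  have hre : ∀ t ∈ ball s ε, a ≤ t.re ∧ t.re ≤ β.re - b := by
    intro t ht
    rw [mem_ball, Complex.dist_eq] at ht
    have h1 : |(t - s).re| ≤ ‖t - s‖ := Complex.abs_re_le_norm _
    have h2 : (t - s).re = t.re - s.re := by simp [Complex.sub_re]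
    rw [h2] at h1
    have := abs_le.1 (h1.trans ht.le)
    constructor
    · rw [hadef]; linarith [this.1]
    · rw [hbdef]; linarith [this.2]
  have hres := hasDerivAt_integral_of_dominated_loc_of_deriv_le
    (μ := MeasureTheory.volume.restrict (Set.Ioo (0:ℝ) 1))
    (F := fun t u => fK β z m t u) (F' := fun t u => fK β z (m + 1) t u)
    (bound := fun u => Real.exp (‖z‖) * (2 / δ) ^ (m + 1) *
      (u ^ (a - ((m + 1 : ℕ) : ℝ) * δ - 1) * (1 - u) ^ (b - ((m + 1 : ℕ) : ℝ) * δ - 1)))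
    (ball_mem_nhds s hε)
    (Filter.Eventually.of_forall fun t =>
      (contOn β z m t).aestronglyMeasurable measurableSet_Ioo)
    (fK_integrable β z m hs0 hsβ)
    ((contOn β z (m + 1) s).aestronglyMeasurable measurableSet_Ioo)
    ?_ ?_ ?_
  · exact hres.2
  · filter_upwards [ae_restrict_mem measurableSet_Ioo] with u hu
    intro t ht
    obtain ⟨h1, h2⟩ := hre t ht
    exact norm_fK_le β z (m + 1) ha hb hδ h1 h2 hu
  · exact (integrable_bound hp hq).const_mul _
  · filter_upwards [ae_restrict_mem measurableSet_Ioo] with u hu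
    intro t _
    exact fK_hasDerivAt β z m t hu

lemma iteratedDeriv_intK (β z : ℂ) (n : ℕ) : ∀ s : ℂ, 0 < s.re → s.re < β.re →
    iteratedDeriv n (fun t => ∫ u in Set.Ioo (0 : ℝ) 1, fK β z 0 t u) s =
      ∫ u in Set.Ioo (0 : ℝ) 1, fK β z n s u := by
  induction n with
  | zero => intro s _ _; simp [iteratedDeriv_zero]
  | succ n ih =>
    intro s h1 h2
    rw [iteratedDeriv_succ]
    have hopen : IsOpen {t : ℂ | 0 < t.re ∧ t.re < β.re} := by
      have : {t : ℂ | 0 < t.re ∧ t.re < β.re} = Complex.re ⁻¹' Set.Ioo 0 β.re := rfl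
      rw [this]; exact isOpen_Ioo.preimage Complex.continuous_re
    have hev : (iteratedDeriv n fun t => ∫ u in Set.Ioo (0 : ℝ) 1, fK β z 0 t u)
        =ᶠ[nhds s] fun t => ∫ u in Set.Ioo (0 : ℝ) 1, fK β z n t u := by
      filter_upwards [hopen.mem_nhds ⟨h1, h2⟩] with t ht
      exact ih t ht.1 ht.2
    rw [hev.deriv_eq]
    exact (intK_hasDerivAt β z n h1 h2).deriv

end KummerAux

/-- For `Re(β) > Re(α) > 0`, the `n`-th derivative of `s ↦ ₁f₁(s, β; z)`
(where both exponents `s−1` and `β−s−1` vary with `s`) at `s = α` equals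
`∫₀¹ e^{zu} (Σ_{j=0}^n (−1)^{n−j} C(n,j) (log u)^j (log(1−u))^{n−j})
  u^{α−1}(1−u)^{β−α−1} du`. -/
theorem iteratedDeriv_kummer1f1Int (n : ℕ) (α β z : ℂ) (hα : 0 < α.re) (hβ : α.re < β.re) :
    iteratedDeriv n (fun s => kummer1f1Int s β z) α =
      ∫ u in Set.Ioo (0 : ℝ) 1,
        Complex.exp (z * u) *
          (∑ j ∈ Finset.range (n + 1),
            (-1 : ℂ) ^ (n - j) * (n.choose j) * (Real.log u : ℂ) ^ j *
              (Real.log (1 - u) : ℂ) ^ (n - j)) *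
          (u : ℂ) ^ (α - 1) * ((1 : ℂ) - u) ^ (β - α - 1) := by
  have h1 : (fun s => kummer1f1Int s β z) =
      fun t => ∫ u in Set.Ioo (0 : ℝ) 1, KummerAux.fK β z 0 t u := by
    funext t
    rw [kummer1f1Int]
    congr 1
    funext u
    rw [KummerAux.fK]
    push_cast
    ring
  rw [h1, KummerAux.iteratedDeriv_intK β z n α hα hβ]
  congr 1
  funext u
  rw [KummerAux.fK, KummerAux.klog]
  have hsum : ((Real.log u : ℂ) - (Real.log (1 - u) : ℂ)) ^ n =
      ∑ j ∈ Finset.range (n + 1),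
        (-1 : ℂ) ^ (n - j) * (n.choose j) * (Real.log u : ℂ) ^ j *
          (Real.log (1 - u) : ℂ) ^ (n - j) := by
    rw [sub_pow]
    refine Finset.sum_congr rfl fun j hj => ?_
    rw [Finset.mem_range] at hj
    have hpar : (-1 : ℂ) ^ (j + n) = (-1) ^ (n - j) := by
      rw [show j + n = (n - j) + 2 * j by omega, pow_add, pow_mul]
      simp
    rw [hpar]; ring
  rw [hsum]
  push_cast
  ring
end

section
/- Fix t₀ ∈ ℝ and ε ∈ (0, 1/2). For s = k/2 − δ + it₀ with ε < δ < 1/2, one has |Γ(s)/Γ(k−s)| = |k/2 + it₀|^{−2δ} · |1 + O(1/|k/2 + it₀|)| as k → ∞, where the implied constant is absolute and uniform in δ ∈ (ε, 1/2). In particular |Γ(s)/Γ(k−s)| → 0 as k → ∞, uniformly in δ. -/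
open Complex

open Finset

lemma sum_inv_sq_le (x : ℝ) (hx : 1 ≤ x) (n : ℕ) :
    ∑ j ∈ Finset.range (n + 1), 1 / (x + j) ^ 2 ≤ 2 / x := by
  have hx0 : 0 < x := lt_of_lt_of_le one_pos hx
  rw [Finset.sum_range_succ']
  have h1 : ∑ j ∈ Finset.range n, 1 / (x + (j + 1 : ℕ)) ^ 2 ≤
      ∑ j ∈ Finset.range n, (1 / (x + j) - 1 / (x + (j + 1 : ℕ))) := by
    apply Finset.sum_le_sum
    intro j hj
    have hxj : (0:ℝ) < x + j := by positivity
    have hxj1 : (0:ℝ) < x + (j + 1 : ℕ) := by positivity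
    push_cast at hxj1 ⊢
    rw [div_sub_div _ _ (ne_of_gt hxj) (ne_of_gt hxj1), div_le_div_iff₀ (by positivity) (by positivity)]
    nlinarith
  have h2 : ∑ j ∈ Finset.range n, (1 / (x + j) - 1 / (x + (j + 1 : ℕ))) =
      1 / (x + (0:ℕ)) - 1 / (x + n) := Finset.sum_range_sub' (fun j : ℕ => 1 / (x + j)) n
  have h3 : (1:ℝ) / (x + (0:ℕ)) - 1 / (x + n) ≤ 1 / x := by
    have h5 : (0:ℝ) ≤ 1 / (x + n) := by positivity
    push_cast
    simp only [add_zero]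
    linarith
  have h4 : 1 / (x + (0:ℕ)) ^ 2 ≤ 1 / x := by
    push_cast
    rw [add_zero, div_le_div_iff₀ (by positivity) hx0]
    nlinarith
  have := h1.trans (le_of_eq h2) |>.trans h3
  have h6 : 2 / x = 1 / x + 1 / x := by ring
  linarith [this, h4]

lemma norm_GammaSeq_bounds (x t : ℝ) (hx : 1 ≤ x) {n : ℕ} (hn : 1 ≤ n) :
    Real.exp (-(2 * t ^ 2 / x)) * Real.GammaSeq x n ≤ ‖Complex.GammaSeq ((x:ℂ) + t * I) n‖ ∧
    ‖Complex.GammaSeq ((x:ℂ) + t * I) n‖ ≤ Real.GammaSeq x n := by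
  have hx0 : 0 < x := lt_of_lt_of_le one_pos hx
  set s : ℂ := (x:ℂ) + t * I with hs
  have hres : s.re = x := by simp [hs]
  have hims : s.im = t := by simp [hs]
  have hnpos : (0:ℝ) < n := by exact_mod_cast hn
  -- norm of complex GammaSeq
  have hnorm : ‖Complex.GammaSeq s n‖ =
      (n:ℝ) ^ x * (n.factorial : ℝ) / ∏ j ∈ Finset.range (n + 1), ‖s + (j:ℂ)‖ := by
    rw [Complex.GammaSeq, norm_div, norm_mul, norm_prod]
    congr 2
    · rw [show ((n:ℕ):ℂ) = ((n:ℝ):ℂ) by push_cast; rfl,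
        Complex.norm_cpow_eq_rpow_re_of_pos (by exact_mod_cast hnpos), hres]
    · simp
  have hreal : Real.GammaSeq x n =
      (n:ℝ) ^ x * (n.factorial : ℝ) / ∏ j ∈ Finset.range (n + 1), (x + j) := rfl
  have hnum : (0:ℝ) ≤ (n:ℝ) ^ x * (n.factorial : ℝ) := by positivity
  have hfacpos : ∀ j ∈ Finset.range (n + 1), (0:ℝ) < x + j := by
    intro j _; positivity
  have hP : (0:ℝ) < ∏ j ∈ Finset.range (n + 1), (x + j) :=
    Finset.prod_pos hfacpos
  have hnormfac : ∀ j : ℕ, ‖s + (j:ℂ)‖ ^ 2 = (x + j) ^ 2 + t ^ 2 := by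
    intro j
    rw [Complex.sq_norm, Complex.normSq_apply]
    simp [hs]
    ring
  have hlb : ∀ j : ℕ, x + j ≤ ‖s + (j:ℂ)‖ := by
    intro j
    have := Complex.re_le_norm (s + j)
    simpa [hres] using this
  have hQpos : (0:ℝ) < ∏ j ∈ Finset.range (n + 1), ‖s + (j:ℂ)‖ :=
    Finset.prod_pos fun j hj => lt_of_lt_of_le (hfacpos j hj) (hlb j)
  constructor
  · -- lower bound: Q ≤ exp(2t²/x) * P
    have hub : ∀ j : ℕ, ‖s + (j:ℂ)‖ ≤ (x + j) * Real.exp (t ^ 2 / (x + j) ^ 2) := by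
      intro j
      have hxj : (0:ℝ) < x + j := by positivity
      have h2 : ‖s + (j:ℂ)‖ ^ 2 ≤ ((x + j) * Real.exp (t ^ 2 / (x + j) ^ 2)) ^ 2 := by
        rw [hnormfac j, mul_pow, ← Real.exp_nat_mul]
        have he : 1 + t ^ 2 / (x + j) ^ 2 ≤ Real.exp ((2:ℕ) * (t ^ 2 / (x + j) ^ 2)) := by
          refine le_trans ?_ (Real.add_one_le_exp _)
          have : (0:ℝ) ≤ t ^ 2 / (x + j) ^ 2 := by positivity
          push_cast; linarith
        calc (x + j) ^ 2 + t ^ 2 = (x + j) ^ 2 * (1 + t ^ 2 / (x + j) ^ 2) := by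
              field_simp
          _ ≤ (x + j) ^ 2 * Real.exp ((2:ℕ) * (t ^ 2 / (x + j) ^ 2)) := by
              apply mul_le_mul_of_nonneg_left he (by positivity)
      nlinarith [norm_nonneg (s + (j:ℂ)), mul_pos hxj (Real.exp_pos (t ^ 2 / (x + j) ^ 2))]
    have hQ : ∏ j ∈ Finset.range (n + 1), ‖s + (j:ℂ)‖ ≤
        (∏ j ∈ Finset.range (n + 1), (x + j)) * Real.exp (2 * t ^ 2 / x) := by
      calc ∏ j ∈ Finset.range (n + 1), ‖s + (j:ℂ)‖
          ≤ ∏ j ∈ Finset.range (n + 1), (x + j) * Real.exp (t ^ 2 / (x + j) ^ 2) := by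
            apply Finset.prod_le_prod (fun j _ => norm_nonneg _) (fun j _ => hub j)
        _ = (∏ j ∈ Finset.range (n + 1), (x + j)) *
            Real.exp (∑ j ∈ Finset.range (n + 1), t ^ 2 / (x + j) ^ 2) := by
            rw [Finset.prod_mul_distrib, Real.exp_sum]
        _ ≤ (∏ j ∈ Finset.range (n + 1), (x + j)) * Real.exp (2 * t ^ 2 / x) := by
            apply mul_le_mul_of_nonneg_left _ (le_of_lt hP)
            apply Real.exp_le_exp.mpr
            have := sum_inv_sq_le x hx n
            have heq : ∑ j ∈ Finset.range (n + 1), t ^ 2 / (x + j) ^ 2 =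
                t ^ 2 * ∑ j ∈ Finset.range (n + 1), 1 / (x + j) ^ 2 := by
              rw [Finset.mul_sum]; congr 1; ext j; ring
            rw [heq]
            calc t ^ 2 * ∑ j ∈ Finset.range (n + 1), 1 / (x + j) ^ 2
                ≤ t ^ 2 * (2 / x) := by
                  apply mul_le_mul_of_nonneg_left this (by positivity)
              _ = 2 * t ^ 2 / x := by ring
    rw [hnorm, hreal]
    calc Real.exp (-(2 * t ^ 2 / x)) * ((n:ℝ) ^ x * (n.factorial : ℝ) /
            ∏ j ∈ Finset.range (n + 1), (x + j))
          = (n:ℝ) ^ x * (n.factorial : ℝ) * Real.exp (-(2 * t ^ 2 / x)) /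
            ∏ j ∈ Finset.range (n + 1), (x + j) := by ring
        _ ≤ (n:ℝ) ^ x * (n.factorial : ℝ) / ∏ j ∈ Finset.range (n + 1), ‖s + (j:ℂ)‖ := by
          rw [div_le_div_iff₀ hP hQpos, Real.exp_neg]
          calc (n:ℝ) ^ x * (n.factorial : ℝ) * (Real.exp (2 * t ^ 2 / x))⁻¹ *
                ∏ j ∈ Finset.range (n + 1), ‖s + (j:ℂ)‖
              ≤ (n:ℝ) ^ x * (n.factorial : ℝ) * (Real.exp (2 * t ^ 2 / x))⁻¹ *
                ((∏ j ∈ Finset.range (n + 1), (x + j)) * Real.exp (2 * t ^ 2 / x)) := by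
                apply mul_le_mul_of_nonneg_left hQ (by positivity)
            _ = (n:ℝ) ^ x * (n.factorial : ℝ) * (∏ j ∈ Finset.range (n + 1), (x + j)) *
                ((Real.exp (2 * t ^ 2 / x))⁻¹ * Real.exp (2 * t ^ 2 / x)) := by ring
            _ = (n:ℝ) ^ x * (n.factorial : ℝ) * ∏ j ∈ Finset.range (n + 1), (x + j) := by
                rw [inv_mul_cancel₀ (ne_of_gt (Real.exp_pos _)), mul_one]
  · rw [hnorm, hreal]
    have hPQ : ∏ j ∈ Finset.range (n + 1), (x + j) ≤
        ∏ j ∈ Finset.range (n + 1), ‖s + (j:ℂ)‖ :=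
      Finset.prod_le_prod (fun j hj => (hfacpos j hj).le) (fun j _ => hlb j)
    gcongr

lemma norm_Gamma_bounds (x t : ℝ) (hx : 1 ≤ x) :
    Real.exp (-(2 * t ^ 2 / x)) * Real.Gamma x ≤ ‖Complex.Gamma ((x:ℂ) + t * I)‖ ∧
    ‖Complex.Gamma ((x:ℂ) + t * I)‖ ≤ Real.Gamma x := by
  have h1 : Filter.Tendsto (fun n => ‖Complex.GammaSeq ((x:ℂ) + t * I) n‖)
      Filter.atTop (nhds ‖Complex.Gamma ((x:ℂ) + t * I)‖) :=
    (Complex.GammaSeq_tendsto_Gamma _).norm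
  have h2 : Filter.Tendsto (fun n => Real.GammaSeq x n) Filter.atTop
      (nhds (Real.Gamma x)) := Real.GammaSeq_tendsto_Gamma x
  constructor
  · refine le_of_tendsto_of_tendsto (h2.const_mul _) h1 ?_
    filter_upwards [Filter.eventually_ge_atTop 1] with n hn
    exact (norm_GammaSeq_bounds x t hx hn).1
  · refine le_of_tendsto_of_tendsto h1 h2 ?_
    filter_upwards [Filter.eventually_ge_atTop 1] with n hn
    exact (norm_GammaSeq_bounds x t hx hn).2

lemma real_Gamma_ratio_bounds (x δ : ℝ) (hx : 2 ≤ x) (hδ0 : 0 < δ) (hδ1 : δ < 1 / 2) :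
    (x - δ) ^ (-(2 * δ)) ≤ Real.Gamma (x - δ) / Real.Gamma (x + δ) ∧
    Real.Gamma (x - δ) / Real.Gamma (x + δ) ≤ (x + δ - 1) ^ (-(2 * δ)) := by
  have ha : (0:ℝ) < x - δ := by linarith
  have hb : (0:ℝ) < x + δ := by linarith
  have hb1 : (0:ℝ) < x + δ - 1 := by linarith
  have hGa : 0 < Real.Gamma (x - δ) := Real.Gamma_pos_of_pos ha
  have hGb : 0 < Real.Gamma (x + δ) := Real.Gamma_pos_of_pos hb
  have h2δ : (0:ℝ) < 2 * δ := by linarith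
  have h12δ : (0:ℝ) < 1 - 2 * δ := by linarith
  constructor
  · -- Γ(x+δ) ≤ Γ(x-δ) (x-δ)^{2δ}
    have key := Real.Gamma_mul_add_mul_le_rpow_Gamma_mul_rpow_Gamma
      (s := x - δ) (t := x - δ + 1) (a := 1 - 2 * δ) (b := 2 * δ)
      ha (by linarith) h12δ h2δ (by ring)
    rw [show (1 - 2 * δ) * (x - δ) + 2 * δ * (x - δ + 1) = x + δ by ring] at key
    rw [Real.Gamma_add_one (ne_of_gt ha)] at key
    have key2 : Real.Gamma (x + δ) ≤ Real.Gamma (x - δ) * (x - δ) ^ (2 * δ) := by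
      calc Real.Gamma (x + δ)
          ≤ Real.Gamma (x - δ) ^ (1 - 2 * δ) * ((x - δ) * Real.Gamma (x - δ)) ^ (2 * δ) := key
        _ = Real.Gamma (x - δ) ^ (1 - 2 * δ) * ((x - δ) ^ (2 * δ) * Real.Gamma (x - δ) ^ (2 * δ)) := by
            rw [Real.mul_rpow ha.le hGa.le]
        _ = (Real.Gamma (x - δ) ^ (1 - 2 * δ) * Real.Gamma (x - δ) ^ (2 * δ)) * (x - δ) ^ (2 * δ) := by
            ring
        _ = Real.Gamma (x - δ) * (x - δ) ^ (2 * δ) := by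
            rw [← Real.rpow_add hGa, show 1 - 2 * δ + 2 * δ = 1 by ring, Real.rpow_one]
    rw [Real.rpow_neg ha.le, le_div_iff₀ hGb, inv_mul_eq_div,
      div_le_iff₀ (by positivity : (0:ℝ) < (x - δ) ^ (2 * δ))]
    linarith [key2]
  · -- Γ(x-δ) ≤ Γ(x+δ) (x+δ-1)^{-2δ}
    have key := Real.Gamma_mul_add_mul_le_rpow_Gamma_mul_rpow_Gamma
      (s := x + δ) (t := x + δ - 1) (a := 1 - 2 * δ) (b := 2 * δ)
      hb hb1 h12δ h2δ (by ring)
    rw [show (1 - 2 * δ) * (x + δ) + 2 * δ * (x + δ - 1) = x - δ by ring] at key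
    have hrec : Real.Gamma (x + δ - 1) = Real.Gamma (x + δ) / (x + δ - 1) := by
      have := Real.Gamma_add_one (ne_of_gt hb1)
      rw [show x + δ - 1 + 1 = x + δ by ring] at this
      field_simp [this]
      exact this.symm
    rw [hrec] at key
    have hGb1 : 0 < Real.Gamma (x + δ) / (x + δ - 1) := by positivity
    have key2 : Real.Gamma (x - δ) ≤ Real.Gamma (x + δ) * (x + δ - 1) ^ (-(2 * δ)) := by
      calc Real.Gamma (x - δ)
          ≤ Real.Gamma (x + δ) ^ (1 - 2 * δ) * (Real.Gamma (x + δ) / (x + δ - 1)) ^ (2 * δ) := key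
        _ = Real.Gamma (x + δ) ^ (1 - 2 * δ) * (Real.Gamma (x + δ) ^ (2 * δ) * ((x + δ - 1) ^ (2 * δ))⁻¹) := by
            rw [Real.div_rpow hGb.le hb1.le, div_eq_mul_inv]
        _ = (Real.Gamma (x + δ) ^ (1 - 2 * δ) * Real.Gamma (x + δ) ^ (2 * δ)) * ((x + δ - 1) ^ (2 * δ))⁻¹ := by
            ring
        _ = Real.Gamma (x + δ) * (x + δ - 1) ^ (-(2 * δ)) := by
            rw [← Real.rpow_add hGb, show 1 - 2 * δ + 2 * δ = 1 by ring, Real.rpow_one,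
              Real.rpow_neg hb1.le]
    rw [div_le_iff₀ hGb]
    calc Real.Gamma (x - δ) ≤ Real.Gamma (x + δ) * (x + δ - 1) ^ (-(2 * δ)) := key2
      _ = (x + δ - 1) ^ (-(2 * δ)) * Real.Gamma (x + δ) := mul_comm _ _

lemma exp_le_one_add_two_mul {u : ℝ} (h0 : 0 ≤ u) (h1 : u ≤ 1 / 2) :
    Real.exp u ≤ 1 + 2 * u := by
  have h := Real.add_one_le_exp (-u)
  rw [Real.exp_neg] at h
  have hv : 0 < Real.exp u := Real.exp_pos u
  have h2 : (1 - u) * Real.exp u ≤ 1 := by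
    have := mul_le_mul_of_nonneg_right h hv.le
    rwa [inv_mul_cancel₀ (ne_of_gt hv), show -u + 1 = 1 - u by ring] at this
  nlinarith

set_option maxHeartbeats 2000000 in
lemma ratio_est (t x δ : ℝ) (hx : 8 * (t ^ 2 + |t| + 1) ^ 2 ≤ x)
    (hδ0 : 0 < δ) (hδ1 : δ < 1 / 2) :
    1 - (4 * t ^ 2 + 2 * |t| + 3) / x ≤
      ‖Complex.Gamma (((x - δ : ℝ) : ℂ) + t * I)‖ /
        ‖Complex.Gamma (((x + δ : ℝ) : ℂ) - t * I)‖ * ‖(x : ℂ) + t * I‖ ^ (2 * δ) ∧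
    ‖Complex.Gamma (((x - δ : ℝ) : ℂ) + t * I)‖ /
        ‖Complex.Gamma (((x + δ : ℝ) : ℂ) - t * I)‖ * ‖(x : ℂ) + t * I‖ ^ (2 * δ) ≤
      1 + (4 * t ^ 2 + 2 * |t| + 3) / x := by
  have habs : 0 ≤ |t| := abs_nonneg t
  have ht2 : t ^ 2 = |t| ^ 2 := (_root_.sq_abs t).symm
  have hx8 : 8 ≤ x := by nlinarith
  have hx4t : 4 * t ^ 2 ≤ x := by nlinarith
  have hx8t : 8 * t ^ 2 ≤ x := by nlinarith
  have hxt : |t| ≤ x := by nlinarith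
  have hxK : 8 * t ^ 2 * (|t| + 1) ≤ x := by nlinarith
  have hx0 : (0:ℝ) < x := by linarith
  set r : ℝ := ‖(x : ℂ) + t * I‖ with hr
  have hrx : x ≤ r := by
    have h1 : ((x : ℂ) + t * I).re = x := by simp
    calc x = ((x : ℂ) + t * I).re := h1.symm
      _ ≤ ‖(x : ℂ) + t * I‖ := Complex.re_le_norm _
      _ = r := rfl
  have hr0 : 0 < r := lt_of_lt_of_le hx0 hrx
  have hrub : r ≤ x + |t| := by
    calc r ≤ ‖(x:ℂ)‖ + ‖(t:ℂ) * I‖ := norm_add_le _ _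
      _ = x + |t| := by
        rw [norm_mul, Complex.norm_I, mul_one, Complex.norm_real, Complex.norm_real,
          Real.norm_eq_abs, Real.norm_eq_abs, abs_of_pos hx0]
  -- numerator and denominator bounds
  have hN := norm_Gamma_bounds (x - δ) t (by linarith)
  have hDeq : ((x + δ : ℝ) : ℂ) - t * I = ((x + δ : ℝ) : ℂ) + ((-t : ℝ) : ℂ) * I := by
    push_cast; ring
  have hD := norm_Gamma_bounds (x + δ) (-t) (by linarith)
  rw [← hDeq] at hD
  rw [show (-t) ^ 2 = t ^ 2 by ring] at hD
  set N := ‖Complex.Gamma (((x - δ : ℝ) : ℂ) + t * I)‖ with hNdef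
  set D := ‖Complex.Gamma (((x + δ : ℝ) : ℂ) - t * I)‖ with hDdef
  clear_value r
  have hGa : 0 < Real.Gamma (x - δ) := Real.Gamma_pos_of_pos (by linarith)
  have hGb : 0 < Real.Gamma (x + δ) := Real.Gamma_pos_of_pos (by linarith)
  have hDpos : 0 < D :=
    lt_of_lt_of_le (by positivity) hD.1
  have hNpos : 0 < N := lt_of_lt_of_le (by positivity) hN.1
  clear_value N D
  have hG := real_Gamma_ratio_bounds x δ (by linarith) hδ0 hδ1
  have h2δ0 : (0:ℝ) ≤ 2 * δ := by linarith
  constructor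
  · -- lower bound
    have hstep1 : Real.exp (-(2 * t ^ 2 / (x - δ))) * (Real.Gamma (x - δ) / Real.Gamma (x + δ)) ≤
        N / D := by
      rw [div_eq_mul_inv (Real.Gamma (x - δ)), ← mul_assoc]
      calc Real.exp (-(2 * t ^ 2 / (x - δ))) * Real.Gamma (x - δ) * (Real.Gamma (x + δ))⁻¹
          ≤ N * (Real.Gamma (x + δ))⁻¹ := by
            apply mul_le_mul_of_nonneg_right hN.1 (by positivity)
        _ ≤ N * D⁻¹ := by
            apply mul_le_mul_of_nonneg_left _ hNpos.le
            exact inv_anti₀ hDpos hD.2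
        _ = N / D := by rw [div_eq_mul_inv]
    have hstep2 : (1:ℝ) ≤ (x - δ) ^ (-(2 * δ)) * r ^ (2 * δ) := by
      have hb : 1 ≤ r / (x - δ) := (one_le_div (by linarith)).mpr (by linarith)
      have h1 := Real.one_le_rpow hb h2δ0
      rw [Real.div_rpow hr0.le (by linarith)] at h1
      rw [Real.rpow_neg (by linarith : (0:ℝ) ≤ x - δ), inv_mul_eq_div]
      exact h1
    have hexplow : 1 - (4 * t ^ 2 + 2 * |t| + 3) / x ≤ Real.exp (-(2 * t ^ 2 / (x - δ))) := by
      have h1 : -(2 * t ^ 2 / (x - δ)) + 1 ≤ Real.exp (-(2 * t ^ 2 / (x - δ))) :=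
        Real.add_one_le_exp _
      have h2 : 2 * t ^ 2 / (x - δ) ≤ 4 * t ^ 2 / x := by
        rw [div_le_div_iff₀ (by linarith) hx0]
        nlinarith
      have h3 : 4 * t ^ 2 / x ≤ (4 * t ^ 2 + 2 * |t| + 3) / x := by
        rw [div_le_div_iff₀ hx0 hx0]
        nlinarith
      linarith
    calc 1 - (4 * t ^ 2 + 2 * |t| + 3) / x
        ≤ Real.exp (-(2 * t ^ 2 / (x - δ))) := hexplow
      _ = Real.exp (-(2 * t ^ 2 / (x - δ))) * 1 := (mul_one _).symm
      _ ≤ Real.exp (-(2 * t ^ 2 / (x - δ))) * ((x - δ) ^ (-(2 * δ)) * r ^ (2 * δ)) :=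
          mul_le_mul_of_nonneg_left hstep2 (Real.exp_pos _).le
      _ = Real.exp (-(2 * t ^ 2 / (x - δ))) * (x - δ) ^ (-(2 * δ)) * r ^ (2 * δ) := by ring
      _ ≤ Real.exp (-(2 * t ^ 2 / (x - δ))) * (Real.Gamma (x - δ) / Real.Gamma (x + δ)) *
            r ^ (2 * δ) := by
          apply mul_le_mul_of_nonneg_right _ (by positivity)
          exact mul_le_mul_of_nonneg_left hG.1 (Real.exp_pos _).le
      _ ≤ N / D * r ^ (2 * δ) := by
          apply mul_le_mul_of_nonneg_right hstep1 (by positivity)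
  · -- upper bound
    have hstep1 : N / D ≤ Real.exp (2 * t ^ 2 / (x + δ)) *
        (Real.Gamma (x - δ) / Real.Gamma (x + δ)) := by
      have hDlb : Real.exp (-(2 * t ^ 2 / (x + δ))) * Real.Gamma (x + δ) ≤ D := hD.1
      rw [div_le_iff₀ hDpos]
      calc N ≤ Real.Gamma (x - δ) := hN.2
        _ = Real.exp (2 * t ^ 2 / (x + δ)) * (Real.Gamma (x - δ) / Real.Gamma (x + δ)) *
            (Real.exp (-(2 * t ^ 2 / (x + δ))) * Real.Gamma (x + δ)) := by
            rw [Real.exp_neg]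
            field_simp
        _ ≤ Real.exp (2 * t ^ 2 / (x + δ)) * (Real.Gamma (x - δ) / Real.Gamma (x + δ)) * D := by
            apply mul_le_mul_of_nonneg_left hDlb (by positivity)
    have hb1 : (0:ℝ) < x + δ - 1 := by linarith
    have hstep2 : (x + δ - 1) ^ (-(2 * δ)) * r ^ (2 * δ) ≤ 1 + (2 * |t| + 2) / x := by
      have hbge : 1 ≤ r / (x + δ - 1) := (one_le_div hb1).mpr (by linarith)
      have h1 : (r / (x + δ - 1)) ^ (2 * δ) ≤ r / (x + δ - 1) := by
        have := Real.rpow_le_rpow_of_exponent_le hbge (by linarith : 2 * δ ≤ 1)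
        rwa [Real.rpow_one] at this
      have h2 : r / (x + δ - 1) ≤ 1 + (2 * |t| + 2) / x := by
        rw [div_le_iff₀ hb1]
        have hr2 : r ≤ x + |t| := hrub
        have hexpand : (1 + (2 * |t| + 2) / x) * (x + δ - 1) =
            x + δ - 1 + (2 * |t| + 2) * (x + δ - 1) / x := by ring
        rw [hexpand]
        have hfrac : |t| + 1 ≤ (2 * |t| + 2) * (x + δ - 1) / x := by
          rw [le_div_iff₀ hx0]
          have h8 : (2 * |t| + 2) * (x + δ - 1) - (|t| + 1) * x = (|t| + 1) * (x + 2 * δ - 2) := by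
            ring
          have h9 : 0 ≤ (|t| + 1) * (x + 2 * δ - 2) :=
            mul_nonneg (by linarith) (by linarith)
          linarith
        linarith only [hrub, hfrac, hδ0]
      rw [Real.rpow_neg hb1.le, inv_mul_eq_div, ← Real.div_rpow hr0.le hb1.le]
      exact h1.trans h2
    have hexpub : Real.exp (2 * t ^ 2 / (x + δ)) ≤ 1 + 4 * t ^ 2 / x := by
      have hu0 : (0:ℝ) ≤ 2 * t ^ 2 / (x + δ) := by positivity
      have hu1 : 2 * t ^ 2 / (x + δ) ≤ 2 * t ^ 2 / x := by
        apply div_le_div_of_nonneg_left (by positivity) hx0 (by linarith)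
      have hu2 : 2 * t ^ 2 / x ≤ 1 / 2 := by
        rw [div_le_div_iff₀ hx0 two_pos]
        nlinarith
      calc Real.exp (2 * t ^ 2 / (x + δ)) ≤ Real.exp (2 * t ^ 2 / x) :=
            Real.exp_le_exp.mpr hu1
        _ ≤ 1 + 2 * (2 * t ^ 2 / x) := exp_le_one_add_two_mul (by positivity) hu2
        _ = 1 + 4 * t ^ 2 / x := by ring
    calc N / D * r ^ (2 * δ)
        ≤ Real.exp (2 * t ^ 2 / (x + δ)) * (Real.Gamma (x - δ) / Real.Gamma (x + δ)) *
            r ^ (2 * δ) := mul_le_mul_of_nonneg_right hstep1 (by positivity)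
      _ ≤ Real.exp (2 * t ^ 2 / (x + δ)) * ((x + δ - 1) ^ (-(2 * δ)) * r ^ (2 * δ)) := by
          rw [mul_assoc]
          apply mul_le_mul_of_nonneg_left _ (Real.exp_pos _).le
          exact mul_le_mul_of_nonneg_right hG.2 (by positivity)
      _ ≤ (1 + 4 * t ^ 2 / x) * (1 + (2 * |t| + 2) / x) := by
          apply mul_le_mul hexpub hstep2 ?_ (by positivity)
          have : (0:ℝ) < (x + δ - 1) ^ (-(2 * δ)) := Real.rpow_pos_of_pos hb1 _
          positivity
      _ ≤ 1 + (4 * t ^ 2 + 2 * |t| + 3) / x := by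
          have hexp : (1 + 4 * t ^ 2 / x) * (1 + (2 * |t| + 2) / x) =
              1 + (4 * t ^ 2 + 2 * |t| + 2) / x + 4 * t ^ 2 * (2 * |t| + 2) / x ^ 2 := by
            field_simp; ring
          rw [hexp]
          have h1 : 4 * t ^ 2 * (2 * |t| + 2) / x ^ 2 ≤ 1 / x := by
            rw [div_le_div_iff₀ (by positivity) hx0]
            nlinarith
          have h2 : (4 * t ^ 2 + 2 * |t| + 2) / x + 1 / x = (4 * t ^ 2 + 2 * |t| + 3) / x := by
            field_simp
            ring
          linarith


set_option maxHeartbeats 2000000 in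
/-- Fix `t₀ ∈ ℝ` and `ε ∈ (0, 1/2)`.  For `s = k/2 − δ + it₀` with `ε < δ < 1/2`,
`|Γ(s)/Γ(k−s)| = |k/2 + it₀|^{−2δ} · |1 + O(1/|k/2 + it₀|)|` as `k → ∞`, with an
absolute implied constant, uniformly in `δ`; in particular `|Γ(s)/Γ(k−s)| → 0`
uniformly in `δ`. -/
theorem Gamma_ratio_abs_estimate (t₀ : ℝ) (ε : ℝ) (hε : 0 < ε) (hε' : ε < 1 / 2) :
    (∃ C > (0 : ℝ), ∃ K : ℝ, ∀ k : ℝ, K ≤ k → ∀ δ : ℝ, ε < δ → δ < 1 / 2 →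
      ∃ E : ℂ, ‖E‖ ≤ C / ‖((k / 2 : ℝ) : ℂ) + (t₀ : ℂ) * I‖ ∧
        ‖Complex.Gamma (((k / 2 - δ : ℝ) : ℂ) + (t₀ : ℂ) * I) /
            Complex.Gamma (((k / 2 + δ : ℝ) : ℂ) - (t₀ : ℂ) * I)‖ =
          ‖((k / 2 : ℝ) : ℂ) + (t₀ : ℂ) * I‖ ^ (-(2 * δ)) * ‖1 + E‖) ∧
    (∀ ε' > (0 : ℝ), ∃ K' : ℝ, ∀ k : ℝ, K' ≤ k → ∀ δ : ℝ, ε < δ → δ < 1 / 2 →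
      ‖Complex.Gamma (((k / 2 - δ : ℝ) : ℂ) + (t₀ : ℂ) * I) /
          Complex.Gamma (((k / 2 + δ : ℝ) : ℂ) - (t₀ : ℂ) * I)‖ < ε') := by
  set C₀ : ℝ := 4 * t₀ ^ 2 + 2 * |t₀| + 3 with hC₀
  set C : ℝ := 2 * C₀ with hC
  set K : ℝ := 16 * (t₀ ^ 2 + |t₀| + 1) ^ 2 with hK
  have hC₀pos : 0 < C₀ := by positivity
  have hCpos : 0 < C := by positivity
  have habs : 0 ≤ |t₀| := abs_nonneg t₀
  have ht2 : t₀ ^ 2 = |t₀| ^ 2 := (_root_.sq_abs t₀).symm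
  -- the core estimate, for any k ≥ K and admissible δ
  have core : ∀ k : ℝ, K ≤ k → ∀ δ : ℝ, ε < δ → δ < 1 / 2 →
      ∃ E : ℂ, ‖E‖ ≤ C / ‖((k / 2 : ℝ) : ℂ) + (t₀ : ℂ) * I‖ ∧
        (‖Complex.Gamma (((k / 2 - δ : ℝ) : ℂ) + (t₀ : ℂ) * I) /
            Complex.Gamma (((k / 2 + δ : ℝ) : ℂ) - (t₀ : ℂ) * I)‖ =
          ‖((k / 2 : ℝ) : ℂ) + (t₀ : ℂ) * I‖ ^ (-(2 * δ)) * ‖1 + E‖) ∧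
        ‖Complex.Gamma (((k / 2 - δ : ℝ) : ℂ) + (t₀ : ℂ) * I) /
            Complex.Gamma (((k / 2 + δ : ℝ) : ℂ) - (t₀ : ℂ) * I)‖ ≤
          (1 + C) * (k / 2) ^ (-(2 * ε)) := by
    intro k hk δ hδε hδ2
    set x : ℝ := k / 2 with hx
    have hδ0 : 0 < δ := lt_trans hε hδε
    have hxK : 8 * (t₀ ^ 2 + |t₀| + 1) ^ 2 ≤ x := by
      rw [hx]; rw [hK] at hk; linarith
    have hx8 : (8:ℝ) ≤ x := by nlinarith
    have hx0 : (0:ℝ) < x := by linarith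
    have hxt : |t₀| ≤ x := by nlinarith
    have hest := ratio_est t₀ x δ hxK hδ0 hδ2
    set r : ℝ := ‖(x : ℂ) + t₀ * I‖ with hr
    have hrx : x ≤ r := by
      have h1 : ((x : ℂ) + t₀ * I).re = x := by simp
      calc x = ((x : ℂ) + t₀ * I).re := h1.symm
        _ ≤ ‖(x : ℂ) + t₀ * I‖ := Complex.re_le_norm _
        _ = r := rfl
    have hr0 : 0 < r := lt_of_lt_of_le hx0 hrx
    have hr1 : 1 ≤ r := le_trans (by linarith) hrx
    have hrub : r ≤ 2 * x := by
      calc r ≤ ‖(x:ℂ)‖ + ‖(t₀:ℂ) * I‖ := norm_add_le _ _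
        _ = x + |t₀| := by
          rw [norm_mul, Complex.norm_I, mul_one, Complex.norm_real, Complex.norm_real,
            Real.norm_eq_abs, Real.norm_eq_abs, abs_of_pos hx0]
        _ ≤ 2 * x := by linarith
    set N : ℝ := ‖Complex.Gamma (((x - δ : ℝ) : ℂ) + t₀ * I)‖ with hN
    set D : ℝ := ‖Complex.Gamma (((x + δ : ℝ) : ℂ) - t₀ * I)‖ with hD
    set R : ℝ := N / D * r ^ (2 * δ) with hR
    have hR0 : 0 ≤ R := by
      apply mul_nonneg (div_nonneg (norm_nonneg _) (norm_nonneg _))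
      positivity
    have hRub : R ≤ 1 + C₀ / x := hest.2
    have hRlb : 1 - C₀ / x ≤ R := hest.1
    have hDpos : 0 < D := by
      rcases eq_or_lt_of_le (norm_nonneg (Complex.Gamma (((x + δ : ℝ) : ℂ) - t₀ * I))) with h | h
      · exfalso
        have : R = 0 := by rw [hR, hD, ← h]; simp
        rw [this] at hRlb
        have hC₀x : C₀ / x < 1 := by
          rw [div_lt_one hx0]
          nlinarith
        linarith
      · exact h
    refine ⟨((R - 1 : ℝ) : ℂ), ?_, ?_, ?_⟩
    · have h1 : ‖((R - 1 : ℝ) : ℂ)‖ = |R - 1| := by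
        rw [Complex.norm_real, Real.norm_eq_abs]
      rw [h1]
      have h2 : |R - 1| ≤ C₀ / x := abs_sub_le_iff.mpr ⟨by linarith, by linarith⟩
      have h3 : C₀ / x ≤ C / r := by
        rw [div_le_div_iff₀ hx0 hr0, hC]
        nlinarith
      exact h2.trans h3
    · have h1 : (1 : ℂ) + ((R - 1 : ℝ) : ℂ) = ((R : ℝ) : ℂ) := by push_cast; ring
      have hrne : r ^ (2 * δ) ≠ 0 := ne_of_gt (Real.rpow_pos_of_pos hr0 _)
      rw [norm_div, h1, Complex.norm_real, Real.norm_eq_abs, _root_.abs_of_nonneg hR0, hR,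
        Real.rpow_neg hr0.le, ← hN, ← hD]
      rw [mul_comm ((r ^ (2 * δ))⁻¹) (N / D * r ^ (2 * δ)), mul_assoc,
        mul_inv_cancel₀ hrne, mul_one]
    · have h1 : N / D = R * r ^ (-(2 * δ)) := by
        rw [hR, Real.rpow_neg hr0.le]
        have : r ^ (2 * δ) ≠ 0 := ne_of_gt (Real.rpow_pos_of_pos hr0 _)
        field_simp
      rw [norm_div, ← hN, ← hD, h1]
      have h2 : r ^ (-(2 * δ)) ≤ r ^ (-(2 * ε)) :=
        Real.rpow_le_rpow_of_exponent_le hr1 (by linarith)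
      have h3 : r ^ (-(2 * ε)) ≤ x ^ (-(2 * ε)) := by
        rw [Real.rpow_neg hr0.le, Real.rpow_neg hx0.le]
        apply inv_anti₀ (Real.rpow_pos_of_pos hx0 _)
        exact Real.rpow_le_rpow hx0.le hrx (by linarith)
      have hCx : C₀ / x ≤ C := by
        rw [div_le_iff₀ hx0, hC]
        nlinarith
      calc R * r ^ (-(2 * δ)) ≤ (1 + C) * r ^ (-(2 * δ)) := by
            apply mul_le_mul_of_nonneg_right _ (Real.rpow_pos_of_pos hr0 _).le
            linarith
        _ ≤ (1 + C) * x ^ (-(2 * ε)) := by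
            apply mul_le_mul_of_nonneg_left (h2.trans h3) (by linarith)
  refine ⟨⟨C, hCpos, K, fun k hk δ h1 h2 => by
    obtain ⟨E, hE1, hE2, _⟩ := core k hk δ h1 h2
    exact ⟨E, hE1, hE2⟩⟩, ?_⟩
  intro ε' hε'0
  have htend : Filter.Tendsto (fun k : ℝ => (1 + C) * (k / 2) ^ (-(2 * ε)))
      Filter.atTop (nhds 0) := by
    have h1 : Filter.Tendsto (fun k : ℝ => k / 2) Filter.atTop Filter.atTop :=
      Filter.tendsto_id.atTop_div_const two_pos
    have h2 := (tendsto_rpow_neg_atTop (by linarith : (0:ℝ) < 2 * ε)).comp h1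
    have h3 := h2.const_mul (1 + C)
    simpa using h3
  have hev : ∀ᶠ k : ℝ in Filter.atTop,
      (1 + C) * (k / 2) ^ (-(2 * ε)) < ε' := htend.eventually_lt_const hε'0
  obtain ⟨K', hK'⟩ := Filter.eventually_atTop.mp (hev.and (Filter.eventually_ge_atTop K))
  refine ⟨K', fun k hk δ h1 h2 => ?_⟩
  obtain ⟨hlt, hKk⟩ := hK' k hk
  obtain ⟨E, _, _, hbound⟩ := core k hKk δ h1 h2
  calc ‖Complex.Gamma (((k / 2 - δ : ℝ) : ℂ) + (t₀ : ℂ) * I) /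
        Complex.Gamma (((k / 2 + δ : ℝ) : ℂ) - (t₀ : ℂ) * I)‖
      ≤ (1 + C) * (k / 2) ^ (-(2 * ε)) := hbound
    _ < ε' := hlt
end
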